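/- Let u : S → ℂ be holomorphic on the strip S = {t ∈ ℂ : 0 < Im t < δ} with values in the closed upper half-plane (Im u(t) ≥ 0). Then for every t ∈ S, |u(t) − u(t₀)| is controlled on sub-disks: for the disk D of radius δ/2 centered at t₀ = t* + iδ/2 (tangent to the real axis), if additionally Im u(t₀) ≤ α, then |u(t)| ≤ |u(t₀)| + 2α·(2|t − t₀|/δ)/(1 − 2|t − t₀|/δ) for t ∈ D. In particular there exists M > 0 with |u(t)| ≤ M/Im(t) for t approaching the real boundary nontangentially. -/

import Mathlib

open Metric Complex

-- key algebraic identity: |w - conj a|^2 - |w - a|^2 = 4 Im w Im a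
lemma sq_abs_sub_conj (w a : ℂ) :
    ‖w - (starRingEnd ℂ) a‖ ^ 2 - ‖w - a‖ ^ 2
      = 4 * w.im * a.im := by
  rw [← Complex.normSq_eq_norm_sq, ← Complex.normSq_eq_norm_sq]
  simp [Complex.normSq_apply]
  ring

-- half-plane Schwarz lemma on a ball, strict version
lemma halfplane_schwarz {c : ℂ} {R : ℝ} {f : ℂ → ℂ}
    (hd : DifferentiableOn ℂ f (ball c R)) {ε : ℝ} (hε : 0 < ε)
    (him : ∀ z ∈ ball c R, ε ≤ (f z).im) {z : ℂ} (hz : z ∈ ball c R) :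
    ‖f z - f c‖ * (1 - dist z c / R) ≤
      2 * (f c).im * (dist z c / R) := by
  have hR : 0 < R := pos_of_mem_ball hz
  set a := f c with ha
  have hac : c ∈ ball c R := mem_ball_self hR
  have hima : ε ≤ a.im := him c hac
  have hden : ∀ w ∈ ball c R, f w - (starRingEnd ℂ) a ≠ 0 := by
    intro w hw h0
    have : (f w - (starRingEnd ℂ) a).im = 0 := by rw [h0]; simp
    simp only [Complex.sub_im, Complex.conj_im] at this
    have h1 := him w hw
    nlinarith
  set g : ℂ → ℂ := fun w => (f w - a) / (f w - (starRingEnd ℂ) a) with hg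
  have hgd : DifferentiableOn ℂ g (ball c R) := by
    apply DifferentiableOn.div
    · exact hd.sub (differentiableOn_const _)
    · exact hd.sub (differentiableOn_const _)
    · exact hden
  have hgc : g c = 0 := by
    simp [hg, ha]
  have hlt : ∀ w ∈ ball c R, ‖f w - a‖ < ‖f w - (starRingEnd ℂ) a‖ := by
    intro w hw
    have h4 : 4 * (f w).im * a.im > 0 := by
      have := him w hw; nlinarith
    have hsq := sq_abs_sub_conj (f w) a
    nlinarith [norm_nonneg (f w - a), norm_nonneg (f w - (starRingEnd ℂ) a)]
  have hmaps : Set.MapsTo g (ball c R) (ball (g c) 1) := by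
    intro w hw
    rw [hgc, mem_ball, dist_zero_right]
    have h1 := hlt w hw
    have h2 : ‖f w - (starRingEnd ℂ) a‖ > 0 :=
      lt_of_le_of_lt (norm_nonneg _) h1
    rw [hg]
    simp only [norm_div]
    rw [div_lt_one h2]
    exact h1
  have hsch := Complex.dist_le_div_mul_dist_of_mapsTo_ball hgd (hmaps.mono_right ball_subset_closedBall) hz
  rw [hgc, dist_zero_right] at hsch
  -- |g z| ≤ dist z c / R
  have hgz : ‖g z‖ ≤ dist z c / R := by
    simpa [div_eq_inv_mul, one_div, mul_comm] using hsch
  -- f z - a = g z * (f z - conj a)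
  have hfac : f z - a = g z * (f z - (starRingEnd ℂ) a) := by
    show f z - a = (f z - a) / (f z - (starRingEnd ℂ) a) * (f z - (starRingEnd ℂ) a)
    rw [div_mul_cancel₀ _ (hden z hz)]
  have hconj : ‖a - (starRingEnd ℂ) a‖ = 2 * a.im := by
    have h2a : (0:ℝ) ≤ 2 * a.im := by linarith
    have heq : a - (starRingEnd ℂ) a = (2 * a.im : ℝ) * Complex.I := by
      apply Complex.ext <;> simp <;> ring
    rw [heq, norm_mul, Complex.norm_real, Complex.norm_I, mul_one, Real.norm_eq_abs, _root_.abs_of_nonneg h2a]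
  have hkey : ‖f z - a‖ ≤
      (dist z c / R) * (‖f z - a‖ + 2 * a.im) := by
    calc ‖f z - a‖ = ‖g z‖ * ‖f z - (starRingEnd ℂ) a‖ := by
          rw [hfac, norm_mul]
      _ ≤ (dist z c / R) * ‖f z - (starRingEnd ℂ) a‖ := by
          apply mul_le_mul_of_nonneg_right hgz (norm_nonneg _)
      _ ≤ (dist z c / R) * (‖f z - a‖ + 2 * a.im) := by
          apply mul_le_mul_of_nonneg_left _ (by positivity)
          calc ‖f z - (starRingEnd ℂ) a‖
              = ‖(f z - a) + (a - (starRingEnd ℂ) a)‖ := by ring_nf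
            _ ≤ ‖f z - a‖ + ‖a - (starRingEnd ℂ) a‖ :=
                norm_add_le _ _
            _ = ‖f z - a‖ + 2 * a.im := by rw [hconj]
  nlinarith [hkey]

theorem strip_upper_half_plane_bound (δ : ℝ) (hδ : 0 < δ) (u : ℂ → ℂ)
    (hu : DifferentiableOn ℂ u {t : ℂ | 0 < t.im ∧ t.im < δ})
    (him : ∀ t : ℂ, 0 < t.im → t.im < δ → 0 ≤ (u t).im) :
    ∀ tstar : ℝ, ∀ α : ℝ, 0 < α →
      (u ((tstar : ℂ) + (δ / 2) * Complex.I)).im ≤ α →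
      ∀ t ∈ ball ((tstar : ℂ) + (δ / 2) * Complex.I) (δ / 2),
        ‖u t‖ ≤ ‖u ((tstar : ℂ) + (δ / 2) * Complex.I)‖ +
          2 * α * (2 * ‖t - ((tstar : ℂ) + (δ / 2) * Complex.I)‖ / δ) /
            (1 - 2 * ‖t - ((tstar : ℂ) + (δ / 2) * Complex.I)‖ / δ) := by
  intro tstar α hα hα' t ht
  set t₀ : ℂ := (tstar : ℂ) + (δ / 2) * Complex.I with ht₀
  have hsub : ball t₀ (δ / 2) ⊆ {t : ℂ | 0 < t.im ∧ t.im < δ} := by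
    intro z hz
    rw [mem_ball, Complex.dist_eq] at hz
    have h1 : |(z - t₀).im| ≤ ‖z - t₀‖ := Complex.abs_im_le_norm _
    have h2 : (z - t₀).im = z.im - δ / 2 := by simp [ht₀]
    rw [h2] at h1
    have h3 := abs_lt.mp (lt_of_le_of_lt h1 hz)
    exact ⟨by linarith [h3.1], by linarith [h3.2]⟩
  set ρ : ℝ := 2 * ‖t - t₀‖ / δ with hρ
  have hρ0 : 0 ≤ ρ := by positivity
  have hρ1 : ρ < 1 := by
    rw [mem_ball, Complex.dist_eq] at ht
    rw [hρ, div_lt_one hδ]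
    linarith
  have hdist : dist t t₀ / (δ / 2) = ρ := by
    rw [Complex.dist_eq, hρ]
    field_simp
  -- main step with ε
  have hmain : ∀ ε : ℝ, 0 < ε →
      ‖u t - u t₀‖ * (1 - ρ) ≤ 2 * ((u t₀).im + ε) * ρ := by
    intro ε hε
    set f : ℂ → ℂ := fun w => u w + ε * Complex.I with hf
    have hfd : DifferentiableOn ℂ f (ball t₀ (δ / 2)) :=
      ((hu.mono hsub).add (differentiableOn_const _))
    have hfim : ∀ z ∈ ball t₀ (δ / 2), ε ≤ (f z).im := by
      intro z hz
      have hz' := hsub hz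
      have := him z hz'.1 hz'.2
      simp [hf]; linarith
    have h := halfplane_schwarz hfd hε hfim ht
    have hft : f t - f t₀ = u t - u t₀ := by simp [hf]
    rw [hft, hdist] at h
    have hfim0 : (f t₀).im = (u t₀).im + ε := by simp [hf]
    rw [hfim0] at h
    linarith
  have hlim : ‖u t - u t₀‖ * (1 - ρ) ≤ 2 * α * ρ := by
    apply le_of_forall_pos_le_add
    intro η hη
    have h := hmain (η / 2) (by linarith)
    have him0 : 0 ≤ (u t₀).im := by
      have hmem := hsub (mem_ball_self (by linarith : (0:ℝ) < δ / 2))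
      exact him t₀ hmem.1 hmem.2
    nlinarith
  have h1ρ : 0 < 1 - ρ := by linarith
  have hfinal : ‖u t - u t₀‖ ≤ 2 * α * ρ / (1 - ρ) := by
    rw [le_div_iff₀ h1ρ]; exact hlim
  calc ‖u t‖ ≤ ‖u t₀‖ + ‖u t - u t₀‖ := by
        have := norm_add_le (u t₀) (u t - u t₀)
        simpa using this
    _ ≤ ‖u t₀‖ + 2 * α * ρ / (1 - ρ) := by linarith
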